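/- Let x > 1/2 be a real number, and for a graph G define ρ_x(G) = max(ρ(G), x). Then for any two edge-neighboring graphs G and G' (same vertex set, edge sets differing in exactly one edge), |ρ_x(G) − ρ_x(G')| ≤ 1/(2x−1). -/

import Mathlib

open scoped Classical

/-- Number of edges of `G` with both endpoints in `S` (each edge counted once). -/
noncomputable def edgeCount {n : ℕ} (G : SimpleGraph (Fin n)) (S : Finset (Fin n)) : ℕ :=
  ((S ×ˢ S).filter fun p => G.Adj p.1 p.2 ∧ p.1 < p.2).card

/-- Density `ρ(S) = |E(S)|/|S|`. -/
noncomputable def density {n : ℕ} (G : SimpleGraph (Fin n)) (S : Finset (Fin n)) : ℝ :=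
  (edgeCount G S : ℝ) / (S.card : ℝ)

/-- Maximum subgraph density `ρ(G) = max_{∅≠S⊆V} ρ(S)`. -/
noncomputable def maxDensity {n : ℕ} (G : SimpleGraph (Fin n)) : ℝ :=
  sSup {x : ℝ | ∃ S : Finset (Fin n), S.Nonempty ∧ density G S = x}

lemma densSet_finite {n : ℕ} (G : SimpleGraph (Fin n)) :
    {x : ℝ | ∃ S : Finset (Fin n), S.Nonempty ∧ density G S = x}.Finite := by
  have : {x : ℝ | ∃ S : Finset (Fin n), S.Nonempty ∧ density G S = x}
      = density G '' {S | S.Nonempty} := by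
    ext y; simp [Set.mem_image]
  rw [this]
  exact Set.Finite.image _ (Set.toFinite _)

lemma density_le_maxDensity {n : ℕ} (G : SimpleGraph (Fin n)) (S : Finset (Fin n))
    (hS : S.Nonempty) : density G S ≤ maxDensity G :=
  le_csSup (densSet_finite G).bddAbove ⟨S, hS, rfl⟩

lemma exists_max {n : ℕ} (G : SimpleGraph (Fin n)) (hn : Nonempty (Fin n)) :
    ∃ S : Finset (Fin n), S.Nonempty ∧ density G S = maxDensity G := by
  have hne : {x : ℝ | ∃ S : Finset (Fin n), S.Nonempty ∧ density G S = x}.Nonempty :=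
    ⟨density G Finset.univ, Finset.univ, Finset.univ_nonempty, rfl⟩
  exact hne.csSup_mem (densSet_finite G)

/-- twice the edge count is at most m·m − m. -/
lemma edgeCount_le {n : ℕ} (G : SimpleGraph (Fin n)) [DecidableRel G.Adj]
    (S : Finset (Fin n)) : 2 * edgeCount G S ≤ S.card * S.card - S.card := by
  set A := (S ×ˢ S).filter fun p : Fin n × Fin n => p.1 < p.2 with hA
  set C := (S ×ˢ S).filter fun p : Fin n × Fin n => p.2 < p.1 with hC
  have hsub : edgeCount G S ≤ A.card := by
    unfold edgeCount
    apply Finset.card_le_card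
    intro p hp
    simp only [hA, Finset.mem_filter] at hp ⊢
    exact ⟨hp.1, hp.2.2⟩
  have hAC : A.card = C.card := by
    apply Finset.card_bij (fun p _ => Prod.swap p)
    · intro p hp
      simp only [hA, hC, Finset.mem_filter, Finset.mem_product] at hp ⊢
      exact ⟨⟨hp.1.2, hp.1.1⟩, hp.2⟩
    · intro p hp q hq h
      exact Prod.swap_injective h
    · intro q hq
      refine ⟨Prod.swap q, ?_, by simp⟩
      simp only [hA, hC, Finset.mem_filter, Finset.mem_product] at hq ⊢
      exact ⟨⟨hq.1.2, hq.1.1⟩, hq.2⟩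
  have hdisj : Disjoint A C := by
    rw [Finset.disjoint_left]
    intro p hp hp'
    simp only [hA, hC, Finset.mem_filter] at hp hp'
    exact absurd hp'.2 (asymm hp.2)
  have hunion : A ∪ C = S.offDiag := by
    ext p
    simp only [hA, hC, Finset.mem_union, Finset.mem_filter, Finset.mem_product,
      Finset.mem_offDiag]
    constructor
    · rintro (⟨⟨h1, h2⟩, h3⟩ | ⟨⟨h1, h2⟩, h3⟩)
      · exact ⟨h1, h2, ne_of_lt h3⟩
      · exact ⟨h1, h2, (ne_of_lt h3).symm⟩
    · rintro ⟨h1, h2, h3⟩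
      rcases lt_or_gt_of_ne h3 with h | h
      · exact Or.inl ⟨⟨h1, h2⟩, h⟩
      · exact Or.inr ⟨⟨h1, h2⟩, h⟩
  have hcard : A.card + C.card = S.card * S.card - S.card := by
    rw [← Finset.card_union_of_disjoint hdisj, hunion, Finset.offDiag_card]
  calc 2 * edgeCount G S = edgeCount G S + edgeCount G S := by ring
    _ ≤ A.card + C.card := by
        exact Nat.add_le_add hsub (hAC ▸ hsub)
    _ = S.card * S.card - S.card := hcard

/-- generic: if `A \ B` has at most one element then `|A| ≤ |B| + 1`. -/
lemma card_le_card_add_one {α : Type*} [DecidableEq α] {A B : Finset α}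
    (h : (A \ B).card ≤ 1) : A.card ≤ B.card + 1 := by
  calc A.card ≤ (B ∪ (A \ B)).card := by
        apply Finset.card_le_card
        intro a ha
        by_cases hb : a ∈ B
        · exact Finset.mem_union_left _ hb
        · exact Finset.mem_union_right _ (Finset.mem_sdiff.mpr ⟨ha, hb⟩)
    _ ≤ B.card + (A \ B).card := Finset.card_union_le _ _
    _ ≤ B.card + 1 := Nat.add_le_add le_rfl h

/-- If the symmetric difference is a single edge, edge counts differ by at most one. -/
lemma edgeCount_le_succ {n : ℕ} (G G' : SimpleGraph (Fin n))
    [DecidableRel G.Adj] [DecidableRel G'.Adj]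
    (e : Sym2 (Fin n)) (he : symmDiff G.edgeFinset G'.edgeFinset = {e})
    (S : Finset (Fin n)) : edgeCount G S ≤ edgeCount G' S + 1 := by
  unfold edgeCount
  apply card_le_card_add_one
  rw [Finset.card_le_one]
  intro p hp q hq
  simp only [Finset.mem_sdiff, Finset.mem_filter, not_and, not_lt] at hp hq
  have hmemkey : ∀ r : Fin n × Fin n,
      (r ∈ S ×ˢ S ∧ G.Adj r.1 r.2 ∧ r.1 < r.2) →
      (r ∈ S ×ˢ S → G'.Adj r.1 r.2 → r.2 ≤ r.1) →
      s(r.1, r.2) = e ∧ r.1 < r.2 := by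
    intro r hr1 hr2
    have hmem : r ∈ S ×ˢ S := hr1.1
    have hGadj : G.Adj r.1 r.2 := hr1.2.1
    have hlt : r.1 < r.2 := hr1.2.2
    have hG'nadj : ¬ G'.Adj r.1 r.2 := by
      intro h
      exact absurd hlt (not_lt.mpr (hr2 hmem h))
    have hsymm : s(r.1, r.2) ∈ symmDiff G.edgeFinset G'.edgeFinset := by
      rw [Finset.mem_symmDiff]
      left
      refine ⟨?_, ?_⟩
      · simp only [SimpleGraph.mem_edgeFinset, SimpleGraph.mem_edgeSet]
        exact hGadj
      · simp only [SimpleGraph.mem_edgeFinset, SimpleGraph.mem_edgeSet]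
        exact hG'nadj
    rw [he, Finset.mem_singleton] at hsymm
    exact ⟨hsymm, hlt⟩
  obtain ⟨h1, hpl⟩ := hmemkey p hp.1 hp.2
  obtain ⟨h2, hql⟩ := hmemkey q hq.1 hq.2
  have heq : s(p.1, p.2) = s(q.1, q.2) := by rw [h1, h2]
  rw [Sym2.eq_iff] at heq
  rcases heq with ⟨h3, h4⟩ | ⟨h3, h4⟩
  · exact Prod.ext h3 h4
  · exfalso; rw [h3, h4] at hpl; exact absurd hql (asymm hpl)

lemma one_side {n : ℕ} (G G' : SimpleGraph (Fin n))
    [DecidableRel G.Adj] [DecidableRel G'.Adj]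
    (h : ∀ S : Finset (Fin n), edgeCount G S ≤ edgeCount G' S + 1)
    (hn : Nonempty (Fin n)) (x : ℝ) (hx : 1 / 2 < x) :
    max (maxDensity G) x - max (maxDensity G') x ≤ 1 / (2 * x - 1) := by
  have hpos : 0 < 2 * x - 1 := by linarith
  have hbnd : 0 ≤ 1 / (2 * x - 1) := by positivity
  rcases le_or_gt (maxDensity G) x with hle | hlt
  · rw [max_eq_right hle]
    have : x ≤ max (maxDensity G') x := le_max_right _ _
    linarith
  · rw [max_eq_left hlt.le]
    obtain ⟨S, hS, hd⟩ := exists_max G hn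
    have hm : (0 : ℝ) < S.card := by exact_mod_cast Finset.card_pos.mpr hS
    -- m ≥ 2x+1
    have h2 : 2 * (edgeCount G S : ℝ) ≤ (S.card : ℝ) * S.card - S.card := by
      have h0 := edgeCount_le G S
      have hle' : (S.card : ℕ) ≤ S.card * S.card := Nat.le_mul_of_pos_left _ (Finset.card_pos.mpr hS)
      have h1 : ((2 * edgeCount G S : ℕ) : ℝ) ≤ ((S.card * S.card - S.card : ℕ) : ℝ) := by
        exact_mod_cast h0
      rw [Nat.cast_sub hle'] at h1
      push_cast at h1
      linarith

    have hxd : x < (edgeCount G S : ℝ) / S.card := by rw [← hd] at hlt; exact hlt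
    have hxm : x * S.card < (edgeCount G S : ℝ) := (lt_div_iff₀ hm).mp hxd
    have hmge : 2 * x - 1 ≤ (S.card : ℝ) := by nlinarith
    have hrec : 1 / (S.card : ℝ) ≤ 1 / (2 * x - 1) :=
      one_div_le_one_div_of_le hpos hmge
    have step : density G S ≤ density G' S + 1 / S.card := by
      have hc : (edgeCount G S : ℝ) ≤ edgeCount G' S + 1 := by exact_mod_cast h S
      unfold density
      rw [← add_div]
      gcongr
    have : maxDensity G ≤ maxDensity G' + 1 / (2 * x - 1) := by
      rw [← hd]
      calc density G S ≤ density G' S + 1 / S.card := step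
        _ ≤ maxDensity G' + 1 / (2 * x - 1) :=
            add_le_add (density_le_maxDensity G' S hS) hrec
    have h4 : maxDensity G' ≤ max (maxDensity G') x := le_max_left _ _
    linarith
  
theorem truncated_density_sensitivity {n : ℕ}
    (G G' : SimpleGraph (Fin n)) [DecidableRel G.Adj] [DecidableRel G'.Adj]
    (hneighbor : (symmDiff G.edgeFinset G'.edgeFinset).card = 1)
    (x : ℝ) (hx : 1 / 2 < x) :
    |max (maxDensity G) x - max (maxDensity G') x| ≤ 1 / (2 * x - 1) := by
  obtain ⟨e, he⟩ := Finset.card_eq_one.mp hneighbor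
  have hn : Nonempty (Fin n) := by
    induction e using Sym2.ind with
    | _ a b => exact ⟨a⟩
  have he' : symmDiff G'.edgeFinset G.edgeFinset = {e} := by
    rwa [symmDiff_comm]
  rw [abs_sub_le_iff]
  exact ⟨one_side G G' (edgeCount_le_succ G G' e he) hn x hx,
    one_side G' G (edgeCount_le_succ G' G e he') hn x hx⟩
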